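/- Let ζ = exp(2πi/36). Then |−ζ¹¹ + ζ⁹ − ζ⁷| = 2·cos(π/18) · |ζ¹¹ − ζ⁷ + ζ⁵ − ζ³ + ζ|. -/

import Mathlib

/-- For `ζ = e^{2πi/36}`: `|−ζ¹¹ + ζ⁹ − ζ⁷| = 2 cos(π/18) · |ζ¹¹ − ζ⁷ + ζ⁵ − ζ³ + ζ|`. -/
theorem stmt12 (ζ : ℂ) (hζ : ζ = Complex.exp (2 * Real.pi * Complex.I / 36)) :
    ‖-ζ^11 + ζ^9 - ζ^7‖ =
      2 * Real.cos (Real.pi / 18) * ‖ζ^11 - ζ^7 + ζ^5 - ζ^3 + ζ‖ := by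
  have hζ' : ζ = Complex.exp ((Real.pi / 18 : ℝ) * Complex.I) := by
    rw [hζ]; congr 1; push_cast; ring
  have hne : ζ ≠ 0 := by rw [hζ']; exact Complex.exp_ne_zero _
  have hcos : (ζ^2 + 1 : ℂ) = (2 * Real.cos (Real.pi / 18) : ℝ) * ζ := by
    have h : ζ + ζ⁻¹ = 2 * Complex.cos ((Real.pi / 18 : ℝ)) := by
      rw [hζ', Complex.cos, ← Complex.exp_neg]; ring_nf
    have h2 : ζ^2 + 1 = (ζ + ζ⁻¹) * ζ := by field_simp
    rw [h2, h]
    push_cast [Complex.ofReal_cos]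
    ring
  have h18 : ζ^18 = -1 := by
    have : ζ^18 = Complex.exp (Real.pi * Complex.I) := by
      rw [hζ', ← Complex.exp_nat_mul]; congr 1; push_cast; ring
    rw [this, Complex.exp_pi_mul_I]
  have h6 : ζ^6 + 1 ≠ 0 := by
    have h6v : ζ^6 = Complex.exp ((Real.pi / 3 : ℝ) * Complex.I) := by
      rw [hζ', ← Complex.exp_nat_mul]; congr 1; push_cast; ring
    rw [h6v, Complex.exp_mul_I]
    intro h
    rw [← Complex.ofReal_cos, ← Complex.ofReal_sin] at h
    have him := congrArg Complex.im h
    simp [Real.sin_pi_div_three] at him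
  have h12 : ζ^12 = ζ^6 - 1 := by
    have hfac : (ζ^6 + 1) * (ζ^12 - ζ^6 + 1) = ζ^18 + 1 := by ring
    have hz : (ζ^6 + 1) * (ζ^12 - ζ^6 + 1) = 0 := by rw [hfac, h18]; ring
    rcases mul_eq_zero.mp hz with h | h
    · exact absurd h h6
    · linear_combination h
  have hid : (-ζ^11 + ζ^9 - ζ^7) = -(ζ^2 + 1) * (ζ^11 - ζ^7 + ζ^5 - ζ^3 + ζ) := by
    linear_combination ζ * h12
  have habs : ‖ζ‖ = 1 := by
    rw [hζ']; exact Complex.norm_exp_ofReal_mul_I _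
  rw [hid, norm_mul, norm_neg, hcos, norm_mul, Complex.norm_real, Real.norm_eq_abs, habs]
  have hcpos : 0 ≤ 2 * Real.cos (Real.pi / 18) := by
    have := Real.cos_nonneg_of_mem_Icc (x := Real.pi / 18)
      ⟨by linarith [Real.pi_pos], by linarith [Real.pi_pos]⟩
    linarith
  rw [abs_of_nonneg hcpos]
  ring
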